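/- Let (S, L) be an abstract cubic, let W be a group of permutations of S preserving L, acting on G_S by automorphisms via w · t_x = t_{w(x)}, and let G = G_S ⋊ W be the corresponding semidirect product. Let W' ⊆ W be a finite subgroup and let (g_i)_{i∈I} be a family of elements of G_S such that ∪_{i∈I} δ̃(g_i) is infinite. Then the subgroup of G generated by W' together with all the g_i is not finitely generated. -/

import Mathlib

/-- The defining relators of the reflection group of an abstract cubic `(S, L)`:
`(t_x)^2` for all `x`, and `(t_x t_y t_z)^2` for all collinear triples `(x,y,z) ∈ L`. -/
def cubicRels (S : Type*) (L : S → S → S → Prop) : Set (FreeGroup S) :=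
  {r | (∃ x : S, r = FreeGroup.of x ^ 2) ∨
    ∃ x y z : S, L x y z ∧ r = (FreeGroup.of x * FreeGroup.of y * FreeGroup.of z) ^ 2}

/-- The reflection group `G_S` of an abstract cubic, as a presented group. -/
abbrev ReflGroup (S : Type*) (L : S → S → S → Prop) : Type _ :=
  PresentedGroup (cubicRels S L)

/-- The generator (reflection) `t_x` of the reflection group. -/
def tgen (S : Type*) (L : S → S → S → Prop) (x : S) : ReflGroup S L :=
  PresentedGroup.of x

lemma support_equivMapDomain' {S : Type*} (e : Equiv.Perm S) (f : S →₀ ZMod 2) :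
    ((Finsupp.equivMapDomain e f).support : Set S) = e '' (f.support : Set S) := by
  ext a
  simp only [Finset.coe_sort_coe, Set.mem_image, Finset.mem_coe, Finsupp.mem_support_iff,
    Finsupp.equivMapDomain_apply]
  constructor
  · intro h
    exact ⟨e.symm a, h, e.apply_symm_apply a⟩
  · rintro ⟨b, hb, rfl⟩
    rwa [e.symm_apply_apply]

/-- let `W` be a group of permutations of `S` preserving `L`, acting on `G_S` by
`w · t_x = t_{w(x)}`, and `G = G_S ⋊ W`. If `W' ⊆ W` is a finite subgroup and `(g_i)` is a family
of elements of `G_S` with `⋃_i δ̃(g_i)` infinite, then the subgroup of `G` generated by `W'`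
together with all the `g_i` is not finitely generated. -/
theorem stmt_2 {S : Type*} (L : S → S → S → Prop)
    (hsym₁ : ∀ x y z, L x y z → L y x z)
    (hsym₂ : ∀ x y z, L x y z → L x z y)
    (huniq : ∀ x y z z', L x y z → L x y z' → x ≠ y → z = z')
    (W : Subgroup (Equiv.Perm S))
    (hW : ∀ w ∈ W, ∀ x y z, L x y z → L (w x) (w y) (w z))
    (φ : W →* MulAut (ReflGroup S L))
    (hφ : ∀ (w : W) (x : S), φ w (tgen S L x) = tgen S L (w.1 x))
    (ψ : ReflGroup S L →* Multiplicative (S →₀ ZMod 2))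
    (hψ : ∀ x : S, ψ (tgen S L x) = Multiplicative.ofAdd (Finsupp.single x 1))
    (W' : Subgroup W) (hW' : (W' : Set W).Finite)
    {I : Type*} (g : I → ReflGroup S L)
    (hinf : (⋃ i : I, ((Multiplicative.toAdd (ψ (g i))).support : Set S)).Infinite) :
    ¬ (Subgroup.closure
        ((SemidirectProduct.inl '' Set.range g ∪ SemidirectProduct.inr '' (W' : Set W)) :
          Set (ReflGroup S L ⋊[φ] W))).FG := by
  classical
  intro hFG
  set X : Set (ReflGroup S L ⋊[φ] W) :=
    (SemidirectProduct.inl '' Set.range g ∪ SemidirectProduct.inr '' (W' : Set W)) with hX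
  obtain ⟨F, hF⟩ := hFG
  -- equivariance of ψ
  have hequiv : ∀ (w : W) (a : ReflGroup S L),
      Multiplicative.toAdd (ψ (φ w a)) =
        Finsupp.equivMapDomain (w : Equiv.Perm S) (Multiplicative.toAdd (ψ a)) := by
    intro w a
    have : ψ.comp (φ w).toMonoidHom =
        ((Finsupp.domCongr ((w : Equiv.Perm S) : S ≃ S) :
          (S →₀ ZMod 2) ≃+ (S →₀ ZMod 2)).toMultiplicative :
          Multiplicative (S →₀ ZMod 2) ≃* Multiplicative (S →₀ ZMod 2)).toMonoidHom.comp ψ := by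
      apply PresentedGroup.ext
      intro x
      have h1 : (φ w).toMonoidHom (PresentedGroup.of x) = tgen S L ((w : Equiv.Perm S) x) :=
        hφ w x
      simp only [MonoidHom.comp_apply, h1, hψ, MulEquiv.coe_toMonoidHom]
      have h3 : ψ (PresentedGroup.of x : ReflGroup S L) =
          Multiplicative.ofAdd (Finsupp.single x (1 : ZMod 2)) := hψ x
      rw [h3, show ((Finsupp.domCongr ((w : Equiv.Perm S) : S ≃ S) :
          (S →₀ ZMod 2) ≃+ (S →₀ ZMod 2)).toMultiplicative)
          (Multiplicative.ofAdd (Finsupp.single x (1 : ZMod 2)))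
          = Multiplicative.ofAdd (Finsupp.equivMapDomain (w : Equiv.Perm S)
            (Finsupp.single x (1 : ZMod 2))) from rfl,
        Finsupp.equivMapDomain_single]
    have h2 := congrArg (fun f => f a) this
    simp only [MonoidHom.comp_apply] at h2
    exact congrArg Multiplicative.toAdd h2
  have hsupp : ∀ (w : W) (a : ReflGroup S L),
      ((Multiplicative.toAdd (ψ (φ w a))).support : Set S) =
        (w : Equiv.Perm S) '' ((Multiplicative.toAdd (ψ a)).support : Set S) := by
    intro w a
    rw [hequiv, support_equivMapDomain']
  -- the finite saturated set T
  set T : Set S := ⋃ w ∈ (W' : Set W), ⋃ p ∈ (F : Set (ReflGroup S L ⋊[φ] W)),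
      (w : Equiv.Perm S) '' ((Multiplicative.toAdd (ψ p.left)).support : Set S) with hT
  have hTfin : T.Finite :=
    hW'.biUnion fun w _ => F.finite_toSet.biUnion fun p _ =>
      ((Multiplicative.toAdd (ψ p.left)).support.finite_toSet).image _
  have hTinv : ∀ w ∈ W', (w : Equiv.Perm S) '' T ⊆ T := by
    rintro w hw a ⟨b, hb, rfl⟩
    simp only [hT, Set.mem_iUnion] at hb ⊢
    obtain ⟨w', hw', p, hp, c, hc, rfl⟩ := hb
    exact ⟨w * w', mul_mem hw hw', p, hp, c, hc, rfl⟩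
  -- the subgroup K
  let K : Subgroup (ReflGroup S L ⋊[φ] W) :=
    { carrier := {p | p.right ∈ W' ∧
        ((Multiplicative.toAdd (ψ p.left)).support : Set S) ⊆ T}
      one_mem' := by
        constructor
        · exact one_mem W'
        · simp
      mul_mem' := by
        rintro p q ⟨hp1, hp2⟩ ⟨hq1, hq2⟩
        refine ⟨by rw [SemidirectProduct.mul_right]; exact mul_mem hp1 hq1, ?_⟩
        rw [SemidirectProduct.mul_left, map_mul, toAdd_mul]
        refine subset_trans (Finset.coe_subset.2 Finsupp.support_add) ?_
        rw [Finset.coe_union]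
        apply Set.union_subset hp2
        rw [hsupp]
        exact subset_trans (Set.image_mono hq2) (hTinv _ hp1)
      inv_mem' := by
        rintro p ⟨hp1, hp2⟩
        refine ⟨by rw [SemidirectProduct.inv_right]; exact inv_mem hp1, ?_⟩
        rw [SemidirectProduct.inv_left, hsupp, map_inv]
        have : (Multiplicative.toAdd ((ψ p.left)⁻¹)).support =
            (Multiplicative.toAdd (ψ p.left)).support := by
          show (-(Multiplicative.toAdd (ψ p.left))).support = _
          exact Finsupp.support_neg _
        rw [this]
        exact subset_trans (Set.image_mono hp2) (hTinv _ (inv_mem hp1)) }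
  -- the closure lies in K
  have hXright : Subgroup.closure X ≤ Subgroup.comap
      (SemidirectProduct.rightHom : ReflGroup S L ⋊[φ] W →* W) W' := by
    rw [Subgroup.closure_le]
    rintro p (⟨a, _, rfl⟩ | ⟨w, hw, rfl⟩)
    · show SemidirectProduct.rightHom (SemidirectProduct.inl a) ∈ W'
      rw [SemidirectProduct.rightHom_inl]
      exact one_mem W'
    · show SemidirectProduct.rightHom (SemidirectProduct.inr w) ∈ W'
      rw [SemidirectProduct.rightHom_inr]
      exact hw
  have hFK : (F : Set (ReflGroup S L ⋊[φ] W)) ⊆ K := by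
    intro p hp
    have hpX : p ∈ Subgroup.closure X := by
      rw [← hF]; exact Subgroup.subset_closure hp
    refine ⟨hXright hpX, ?_⟩
    intro a ha
    simp only [hT, Set.mem_iUnion]
    exact ⟨1, one_mem W', p, hp, a, ha, by simp⟩
  have hclK : Subgroup.closure X ≤ K := by
    rw [← hF, Subgroup.closure_le]
    exact hFK
  -- contradiction
  refine hinf (hTfin.subset ?_)
  apply Set.iUnion_subset
  intro i
  have : SemidirectProduct.inl (g i) ∈ Subgroup.closure X :=
    Subgroup.subset_closure (Or.inl ⟨g i, Set.mem_range_self i, rfl⟩)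
  have := (hclK this).2
  simpa using this
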